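/- For n ≥ 2 and 1 ≤ j ≤ n-1, the sum over derangements σ of [n] with σ(n) = j of (-1)^{cyc(σ)} · ∏_{i ∈ RLMv(σ)} x_i · ∏_{i ∈ EXCv(σ)} y_i equals -x₁⋯x_j · y_{j+1}⋯y_n. -/

import Mathlib

open Finset

/-- Number of cycles of a permutation (counting fixed points as 1-cycles). -/
def cyc {n : ℕ} (σ : Equiv.Perm (Fin n)) : ℕ :=
  σ.cycleType.card + (Finset.univ.filter fun i => σ i = i).card

/-- Set of excedance values of a permutation: values v with σ⁻¹ v < v. -/
def excVal {n : ℕ} (σ : Equiv.Perm (Fin n)) : Finset (Fin n) :=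
  Finset.univ.filter fun v => σ.symm v < v

/-- Set of right-to-left minimum indices. -/
def rlmIdx {n : ℕ} (σ : Equiv.Perm (Fin n)) : Finset (Fin n) :=
  Finset.univ.filter fun i => ∀ k, i < k → σ i < σ k

/-- Set of right-to-left minimum values. -/
def rlmVal {n : ℕ} (σ : Equiv.Perm (Fin n)) : Finset (Fin n) :=
  (rlmIdx σ).image σ

section
variable {R : Type*} [CommRing R]

lemma cyc_sign {n : ℕ} (σ : Equiv.Perm (Fin n)) :
    ((-1 : R) ^ cyc σ) = (-1) ^ n * ((Equiv.Perm.sign σ : ℤ) : R) := by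
  have hs : ((Equiv.Perm.sign σ : ℤ) : R)
      = (-1) ^ (σ.cycleType.sum + Multiset.card σ.cycleType) := by
    rw [Equiv.Perm.sign_of_cycleType]
    push_cast
    simp
  have hcard : σ.support.card + (Finset.univ.filter fun i => σ i = i).card = n := by
    classical
    have : σ.support = Finset.univ.filter fun i => ¬ σ i = i := by
      ext i; simp [Equiv.Perm.mem_support]
    rw [this]
    have := Finset.card_filter_add_card_filter_not (s := (Finset.univ : Finset (Fin n))) (fun i => σ i = i)
    simp only [Finset.card_univ, Fintype.card_fin] at this
    omega
  have hexp : cyc σ + (σ.cycleType.sum + Multiset.card σ.cycleType)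
      = n + 2 * Multiset.card σ.cycleType := by
    unfold cyc
    rw [Equiv.Perm.sum_cycleType]
    omega
  have h1 : ((-1 : R) ^ cyc σ) * (-1) ^ (σ.cycleType.sum + Multiset.card σ.cycleType)
      = (-1) ^ n := by
    rw [← pow_add, hexp, pow_add, pow_mul]
    norm_num
  have h2 : ((-1 : R) ^ (σ.cycleType.sum + Multiset.card σ.cycleType))
      * (-1) ^ (σ.cycleType.sum + Multiset.card σ.cycleType) = 1 := by
    rw [← pow_add, ← two_mul, pow_mul]
    norm_num
  calc ((-1 : R) ^ cyc σ)
      = ((-1 : R) ^ cyc σ) * (((-1) ^ (σ.cycleType.sum + Multiset.card σ.cycleType))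
        * (-1) ^ (σ.cycleType.sum + Multiset.card σ.cycleType)) := by rw [h2, mul_one]
    _ = (-1) ^ n * ((Equiv.Perm.sign σ : ℤ) : R) := by
        rw [← mul_assoc, h1, hs]


open Equiv Fin Equiv.Perm

lemma mem_excVal {n : ℕ} (σ : Equiv.Perm (Fin n)) (v : Fin n) :
    v ∈ excVal σ ↔ σ.symm v < v := by simp [excVal]

lemma mem_rlmVal {n : ℕ} (σ : Equiv.Perm (Fin n)) (v : Fin n) :
    v ∈ rlmVal σ ↔ ∀ k, σ.symm v < k → v < σ k := by
  unfold rlmVal rlmIdx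
  simp only [Finset.mem_image, Finset.mem_filter, Finset.mem_univ, true_and]
  constructor
  · rintro ⟨i, hi, rfl⟩ k hk
    exact hi k (by simpa using hk)
  · intro h
    exact ⟨σ.symm v, fun k hk => by simpa using h k hk, by simp⟩

-- extension at a point
def extAt {m : ℕ} (j : Fin (m + 1)) (ρ : Equiv.Perm (Fin m)) : Equiv.Perm (Fin (m + 1)) :=
  ρ.extendDomain (finSuccAboveEquiv j)

lemma extAt_self {m : ℕ} (j : Fin (m + 1)) (ρ : Equiv.Perm (Fin m)) : extAt j ρ j = j :=
  Equiv.Perm.extendDomain_apply_not_subtype _ _ (by simp)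

lemma extAt_succAbove {m : ℕ} (j : Fin (m + 1)) (ρ : Equiv.Perm (Fin m)) (i : Fin m) :
    extAt j ρ (j.succAbove i) = j.succAbove (ρ i) := by
  have h := Equiv.Perm.extendDomain_apply_image ρ (finSuccAboveEquiv j) i
  simpa [finSuccAboveEquiv_apply, extAt] using h

lemma sign_extAt {m : ℕ} (j : Fin (m + 1)) (ρ : Equiv.Perm (Fin m)) :
    Equiv.Perm.sign (extAt j ρ) = Equiv.Perm.sign ρ :=
  Equiv.Perm.sign_extendDomain ρ _

-- restriction at a fixed point
def resAt {m : ℕ} (j : Fin (m + 1)) (π : Equiv.Perm (Fin (m + 1))) (hπ : π j = j) :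
    Equiv.Perm (Fin m) :=
  Equiv.permCongr (finSuccAboveEquiv j).symm
    (π.subtypePerm (fun x => by
      constructor
      · intro hx h; exact hx (h ▸ hπ)
      · intro hx h; exact hx (π.injective (h.trans hπ.symm) ▸ rfl)))

lemma succAbove_resAt {m : ℕ} (j : Fin (m + 1)) (π : Equiv.Perm (Fin (m + 1)))
    (hπ : π j = j) (i : Fin m) :
    j.succAbove (resAt j π hπ i) = π (j.succAbove i) := by
  unfold resAt
  have h1 : ∀ s : {x : Fin (m+1) // x ≠ j}, j.succAbove ((finSuccAboveEquiv j).symm s) = s.val := by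
    intro s
    have := (finSuccAboveEquiv j).apply_symm_apply s
    exact congrArg Subtype.val this
  simp only [Equiv.permCongr_apply]
  rw [h1]
  simp [Equiv.Perm.subtypePerm_apply, finSuccAboveEquiv_apply]

lemma extAt_resAt {m : ℕ} (j : Fin (m + 1)) (π : Equiv.Perm (Fin (m + 1))) (hπ : π j = j) :
    extAt j (resAt j π hπ) = π := by
  refine Equiv.ext fun x => ?_
  rcases eq_or_ne x j with rfl | hx
  · rw [extAt_self, hπ]
  · obtain ⟨i, rfl⟩ := Fin.exists_succAbove_eq hx
    rw [extAt_succAbove, succAbove_resAt]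

lemma resAt_extAt {m : ℕ} (j : Fin (m + 1)) (ρ : Equiv.Perm (Fin m))
    (h : extAt j ρ j = j := extAt_self j ρ) :
    resAt j (extAt j ρ) h = ρ := by
  refine Equiv.ext fun i => ?_
  apply Fin.succAbove_right_injective (p := j)
  rw [succAbove_resAt, extAt_succAbove]

-- NEW PART BELOW
lemma extAt_symm_succAbove {m : ℕ} (j : Fin (m + 1)) (ρ : Equiv.Perm (Fin m)) (u : Fin m) :
    (extAt j ρ).symm (j.succAbove u) = j.succAbove (ρ.symm u) := by
  rw [Equiv.symm_apply_eq, extAt_succAbove, Equiv.apply_symm_apply]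

lemma rlm_extAt {m : ℕ} (j : Fin (m + 1)) (ρ : Equiv.Perm (Fin m)) :
    (rlmVal (extAt j ρ)).filter (· < j)
      = ((rlmVal ρ).filter (fun u => castSucc u < j)).image j.succAbove := by
  ext v
  simp only [Finset.mem_filter, Finset.mem_image]
  constructor
  · rintro ⟨hv, hvj⟩
    obtain ⟨u, rfl⟩ := Fin.exists_succAbove_eq (Fin.ne_of_lt hvj)
    rw [mem_rlmVal, extAt_symm_succAbove] at hv
    refine ⟨u, ⟨?_, ?_⟩, rfl⟩
    · rw [mem_rlmVal]
      intro k hk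
      have := hv (j.succAbove k) ((Fin.succAbove_lt_succAbove_iff).mpr hk)
      rw [extAt_succAbove] at this
      exact (Fin.succAbove_lt_succAbove_iff).mp this
    · exact (Fin.succAbove_lt_iff_castSucc_lt j u).mp hvj
  · rintro ⟨u, ⟨hu, huj⟩, rfl⟩
    have hvj : j.succAbove u < j := (Fin.succAbove_lt_iff_castSucc_lt j u).mpr huj
    refine ⟨?_, hvj⟩
    rw [mem_rlmVal, extAt_symm_succAbove]
    intro k hk
    rcases eq_or_ne k j with rfl | hkj
    · rw [extAt_self]; exact hvj
    · obtain ⟨k', rfl⟩ := Fin.exists_succAbove_eq hkj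
      rw [extAt_succAbove]
      rw [Fin.succAbove_lt_succAbove_iff] at hk ⊢
      exact (mem_rlmVal ρ u).mp hu k' hk

lemma exc_extAt {m : ℕ} (j : Fin (m + 1)) (ρ : Equiv.Perm (Fin m)) :
    (excVal (extAt j ρ)).filter (· ≠ j) = (excVal ρ).image j.succAbove := by
  ext v
  simp only [Finset.mem_filter, Finset.mem_image]
  constructor
  · rintro ⟨hv, hvj⟩
    obtain ⟨u, rfl⟩ := Fin.exists_succAbove_eq hvj
    rw [mem_excVal, extAt_symm_succAbove, Fin.succAbove_lt_succAbove_iff] at hv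
    exact ⟨u, (mem_excVal ρ u).mpr hv, rfl⟩
  · rintro ⟨u, hu, rfl⟩
    refine ⟨?_, Fin.succAbove_ne j u⟩
    rw [mem_excVal, extAt_symm_succAbove, Fin.succAbove_lt_succAbove_iff]
    exact (mem_excVal ρ u).mp hu

section BridgeSets
variable {m : ℕ} (σ : Equiv.Perm (Fin (m + 2))) (τ : Equiv.Perm (Fin (m + 1))) (j₀ : Fin (m + 1))
variable (hlast : σ (Fin.last (m + 1)) = castSucc j₀)
variable (hc : σ (castSucc (τ.symm j₀)) = Fin.last (m + 1))
variable (hother : ∀ i, i ≠ τ.symm j₀ → σ (castSucc i) = castSucc (τ i))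

include hlast hc hother

lemma sym_last : σ.symm (Fin.last (m + 1)) = castSucc (τ.symm j₀) := by
  rw [Equiv.symm_apply_eq, hc]

lemma sym_j : σ.symm (castSucc j₀) = Fin.last (m + 1) := by
  rw [Equiv.symm_apply_eq, hlast]

lemma sym_other (u : Fin (m + 1)) (hu : u ≠ j₀) :
    σ.symm (castSucc u) = castSucc (τ.symm u) := by
  rw [Equiv.symm_apply_eq, hother _ (fun h => hu (by simpa using congrArg τ h)),
    Equiv.apply_symm_apply]

lemma rlm_bridge :
    rlmVal σ = insert (castSucc j₀) (((rlmVal τ).filter (· < j₀)).image castSucc) := by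
  ext v
  simp only [Finset.mem_insert, Finset.mem_image, Finset.mem_filter]
  rcases eq_or_ne v (Fin.last (m + 1)) with rfl | hvlast
  · constructor
    · intro hv
      rw [mem_rlmVal, sym_last σ τ j₀ hlast hc hother] at hv
      have := hv (Fin.last (m + 1)) (castSucc_lt_last _)
      rw [hlast] at this
      exact absurd this (Fin.not_lt.mpr (castSucc_lt_last j₀).le)
    · rintro (h | ⟨u, _, h⟩)
      · exact absurd h.symm (Fin.ne_of_lt (castSucc_lt_last j₀))
      · exact absurd h (Fin.ne_of_lt (castSucc_lt_last u))
  · obtain ⟨u, rfl⟩ := Fin.exists_succAbove_eq hvlast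
    rw [Fin.succAbove_last] at *
    rcases eq_or_ne u j₀ with rfl | huj
    · constructor
      · intro _; exact Or.inl rfl
      · intro _
        rw [mem_rlmVal, sym_j σ τ u hlast hc hother]
        intro k hk
        exact absurd hk (Fin.not_lt.mpr (Fin.le_last k))
    · have hiff : castSucc u ∈ rlmVal σ ↔ (u ∈ rlmVal τ ∧ u < j₀) := by
        rw [mem_rlmVal, sym_other σ τ j₀ hlast hc hother u huj]
        constructor
        · intro H
          have hult : u < j₀ := by
            have := H (Fin.last (m + 1)) (castSucc_lt_last _)
            rw [hlast, castSucc_lt_castSucc_iff] at this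
            exact this
          refine ⟨(mem_rlmVal τ u).mpr ?_, hult⟩
          intro k' hk'
          rcases eq_or_ne k' (τ.symm j₀) with rfl | hk'j
          · rw [Equiv.apply_symm_apply]; exact hult
          · have := H (castSucc k') (by rwa [castSucc_lt_castSucc_iff])
            rw [hother _ hk'j, castSucc_lt_castSucc_iff] at this
            exact this
        · rintro ⟨hu, hult⟩ k hk
          rcases eq_or_ne k (Fin.last (m + 1)) with rfl | hklast
          · rw [hlast, castSucc_lt_castSucc_iff]; exact hult
          · obtain ⟨k', rfl⟩ := Fin.exists_succAbove_eq hklast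
            rw [Fin.succAbove_last] at *
            rcases eq_or_ne k' (τ.symm j₀) with rfl | hk'j
            · rw [hc]; exact castSucc_lt_last u
            · rw [hother _ hk'j, castSucc_lt_castSucc_iff]
              rw [castSucc_lt_castSucc_iff] at hk
              exact (mem_rlmVal τ u).mp hu k' hk
      rw [hiff]
      constructor
      · rintro ⟨hu, hult⟩
        exact Or.inr ⟨u, ⟨hu, hult⟩, rfl⟩
      · rintro (h | ⟨u', ⟨hu', hu'lt⟩, h⟩)
        · exact absurd (castSucc_injective _ h) huj
        · obtain rfl := castSucc_injective _ h
          exact ⟨hu', hu'lt⟩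

lemma exc_bridge :
    excVal σ = insert (Fin.last (m + 1)) (((excVal τ).filter (· ≠ j₀)).image castSucc) := by
  ext v
  simp only [Finset.mem_insert, Finset.mem_image, Finset.mem_filter]
  rcases eq_or_ne v (Fin.last (m + 1)) with rfl | hvlast
  · simp only [true_or, iff_true]
    rw [mem_excVal, sym_last σ τ j₀ hlast hc hother]
    exact castSucc_lt_last _
  · obtain ⟨u, rfl⟩ := Fin.exists_succAbove_eq hvlast
    rw [Fin.succAbove_last] at *
    rcases eq_or_ne u j₀ with rfl | huj
    · constructor
      · intro hv
        rw [mem_excVal, sym_j σ τ u hlast hc hother] at hv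
        exact absurd hv (Fin.not_lt.mpr (castSucc_lt_last u).le)
      · rintro (h | ⟨u', ⟨_, hu'⟩, h⟩)
        · exact absurd h hvlast
        · exact absurd (castSucc_injective _ h) hu'
    · rw [mem_excVal, sym_other σ τ j₀ hlast hc hother u huj, castSucc_lt_castSucc_iff]
      constructor
      · intro h
        exact Or.inr ⟨u, ⟨(mem_excVal τ u).mpr h, huj⟩, rfl⟩
      · rintro (h | ⟨u', ⟨hu', _⟩, h⟩)
        · exact absurd h hvlast
        · obtain rfl := castSucc_injective _ h
          exact (mem_excVal τ _).mp hu'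

end BridgeSets

end

section Main
variable {R : Type*} [CommRing R]
open Finset Equiv Fin Equiv.Perm

def ThmP (R : Type*) [CommRing R] (m : ℕ) : Prop :=
  ∀ j : Fin (m + 1), j ≠ Fin.last m → ∀ x y : Fin (m + 1) → R,
    ∑ σ ∈ Finset.univ.filter (fun σ : Equiv.Perm (Fin (m + 1)) =>
        (∀ i, σ i ≠ i) ∧ σ (Fin.last m) = j),
      (-1 : R) ^ cyc σ * (∏ v ∈ rlmVal σ, x v) * (∏ v ∈ excVal σ, y v)
    = -((∏ v ∈ Finset.univ.filter (· ≤ j), x v) * ∏ v ∈ Finset.univ.filter (j < ·), y v)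

def LemP (R : Type*) [CommRing R] (m : ℕ) : Prop :=
  ∀ (j : Fin (m + 1)) (x y : Fin (m + 1) → R),
    ∑ τ ∈ Finset.univ.filter (fun τ : Equiv.Perm (Fin (m + 1)) => ∀ i, i ≠ j → τ i ≠ i),
      (-1 : R) ^ cyc τ * (∏ v ∈ (rlmVal τ).filter (· < j), x v) *
        (∏ v ∈ (excVal τ).filter (· ≠ j), y v)
    = -((∏ v ∈ Finset.univ.filter (· < j), x v) * ∏ v ∈ Finset.univ.filter (j < ·), y v)

theorem bridge {m : ℕ} (h : LemP R m) : ThmP R (m + 1) := by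
  intro j hj x y
  have hjv : j.val < m + 1 :=
    lt_of_le_of_ne (Nat.lt_succ_iff.mp j.isLt) (fun hh => hj (Fin.ext hh))
  set j₀ : Fin (m + 1) := ⟨j.val, hjv⟩ with hj₀def
  have hjc : castSucc j₀ = j := Fin.ext rfl
  set g : Equiv.Perm (Fin (m + 1)) → Equiv.Perm (Fin (m + 2)) := fun τ =>
    extAt (Fin.last (m + 1)) τ * Equiv.swap (castSucc (τ.symm j₀)) (Fin.last (m + 1)) with hg
  have extL : ∀ (τ : Equiv.Perm (Fin (m + 1))) (i : Fin (m + 1)),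
      extAt (Fin.last (m + 1)) τ (castSucc i) = castSucc (τ i) := by
    intro τ i
    have := extAt_succAbove (Fin.last (m + 1)) τ i
    rwa [Fin.succAbove_last] at this
  have extLlast : ∀ τ : Equiv.Perm (Fin (m + 1)),
      extAt (Fin.last (m + 1)) τ (Fin.last (m + 1)) = Fin.last (m + 1) :=
    fun τ => extAt_self _ _
  have hg_last : ∀ τ : Equiv.Perm (Fin (m + 1)), g τ (Fin.last (m + 1)) = castSucc j₀ := by
    intro τ
    simp only [hg, Equiv.Perm.mul_apply]
    rw [Equiv.swap_apply_right, extL, Equiv.apply_symm_apply]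
  have hg_c : ∀ τ : Equiv.Perm (Fin (m + 1)),
      g τ (castSucc (τ.symm j₀)) = Fin.last (m + 1) := by
    intro τ
    simp only [hg, Equiv.Perm.mul_apply]
    rw [Equiv.swap_apply_left, extLlast]
  have hg_other : ∀ (τ : Equiv.Perm (Fin (m + 1))) (i : Fin (m + 1)), i ≠ τ.symm j₀ →
      g τ (castSucc i) = castSucc (τ i) := by
    intro τ i hi
    simp only [hg, Equiv.Perm.mul_apply]
    rw [Equiv.swap_apply_of_ne_of_ne (fun hh => hi (castSucc_injective _ hh))
      (Fin.ne_of_lt (castSucc_lt_last i)), extL]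
  -- S as image of T
  have hST : (Finset.univ.filter (fun σ : Equiv.Perm (Fin (m + 2)) =>
        (∀ i, σ i ≠ i) ∧ σ (Fin.last (m + 1)) = j))
      = (Finset.univ.filter (fun τ : Equiv.Perm (Fin (m + 1)) =>
          ∀ i, i ≠ j₀ → τ i ≠ i)).image g := by
    ext σ
    simp only [Finset.mem_image, Finset.mem_filter, Finset.mem_univ, true_and]
    constructor
    · rintro ⟨hder, hσlast⟩
      have hwfix : (σ * Equiv.swap (σ.symm (Fin.last (m + 1))) (Fin.last (m + 1)))
          (Fin.last (m + 1)) = Fin.last (m + 1) := by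
        simp [Equiv.Perm.mul_apply, Equiv.swap_apply_right]
      set τ := resAt (Fin.last (m + 1))
        (σ * Equiv.swap (σ.symm (Fin.last (m + 1))) (Fin.last (m + 1))) hwfix with hτdef
      have hext : extAt (Fin.last (m + 1)) τ
          = σ * Equiv.swap (σ.symm (Fin.last (m + 1))) (Fin.last (m + 1)) :=
        extAt_resAt _ _ _
      have hwne : σ.symm (Fin.last (m + 1)) ≠ Fin.last (m + 1) := by
        intro hh
        have := σ.apply_symm_apply (Fin.last (m + 1))
        rw [hh, hσlast] at this
        exact hj this
      obtain ⟨w₀, hw₀⟩ : ∃ w₀, castSucc w₀ = σ.symm (Fin.last (m + 1)) := by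
        obtain ⟨w₀, hw₀⟩ := Fin.exists_succAbove_eq hwne
        exact ⟨w₀, by rwa [Fin.succAbove_last] at hw₀⟩
      have hτw₀ : τ w₀ = j₀ := by
        have h1 : extAt (Fin.last (m + 1)) τ (castSucc w₀) = castSucc j₀ := by
          rw [hext]
          simp only [Equiv.Perm.mul_apply]
          rw [hw₀, Equiv.swap_apply_left, hσlast, hjc]
        rw [extL] at h1
        exact castSucc_injective _ h1
      have hτsymm : τ.symm j₀ = w₀ := by rw [← hτw₀, Equiv.symm_apply_apply]
      refine ⟨τ, ?_, ?_⟩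
      · intro i hi hfix
        have h1 : extAt (Fin.last (m + 1)) τ (castSucc i) = castSucc i := by
          rw [extL, hfix]
        rw [hext] at h1
        simp only [Equiv.Perm.mul_apply] at h1
        rcases eq_or_ne (castSucc i) (σ.symm (Fin.last (m + 1))) with he | hne
        · rw [← hw₀] at he
          have hiw : i = w₀ := castSucc_injective _ he
          subst hiw
          exact hi (hfix.symm.trans hτw₀)
        · rw [Equiv.swap_apply_of_ne_of_ne hne (Fin.ne_of_lt (castSucc_lt_last i))] at h1
          exact hder _ h1
      · -- g τ = σ
        rw [hg]
        simp only
        rw [hτsymm, hw₀, hext, mul_assoc, Equiv.swap_mul_self, mul_one]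
    · rintro ⟨τ, hτ, rfl⟩
      refine ⟨?_, by rw [hg_last, hjc]⟩
      intro i'
      rcases eq_or_ne i' (Fin.last (m + 1)) with rfl | hne
      · rw [hg_last]
        exact Fin.ne_of_lt (castSucc_lt_last j₀)
      · obtain ⟨i, hi⟩ : ∃ i, castSucc i = i' := by
          obtain ⟨i, hi⟩ := Fin.exists_succAbove_eq hne
          exact ⟨i, by rwa [Fin.succAbove_last] at hi⟩
        subst hi
        rcases eq_or_ne i (τ.symm j₀) with rfl | hneq
        · rw [hg_c]
          exact (Fin.ne_of_lt (castSucc_lt_last _)).symm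
        · rw [hg_other _ _ hneq]
          intro hh
          have hfix : τ i = i := castSucc_injective _ hh
          rcases eq_or_ne i j₀ with rfl | hij
          · exact hneq (((Equiv.symm_apply_eq τ).mpr hfix.symm)).symm
          · exact hτ i hij hfix
  -- injectivity of g
  have hginj : Function.Injective g := by
    intro τ₁ τ₂ hgeq
    have hsymm : castSucc (τ₁.symm j₀) = castSucc (τ₂.symm j₀) := by
      have h1 := hg_c τ₁
      have h2 := hg_c τ₂
      rw [hgeq] at h1
      rw [← h2] at h1
      exact (g τ₂).injective h1
    have hswap : Equiv.swap (castSucc (τ₁.symm j₀)) (Fin.last (m + 1))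
        = Equiv.swap (castSucc (τ₂.symm j₀)) (Fin.last (m + 1)) := by rw [hsymm]
    have hext : extAt (Fin.last (m + 1)) τ₁ = extAt (Fin.last (m + 1)) τ₂ := by
      have := hgeq
      rw [hg] at this
      simp only at this
      rw [hswap] at this
      exact mul_right_cancel this
    refine Equiv.ext fun i => ?_
    have := congrArg (fun π : Equiv.Perm (Fin (m + 2)) => π (castSucc i)) hext
    simp only [extL] at this
    exact castSucc_injective _ this
  rw [hST, Finset.sum_image (fun a _ b _ hab => hginj hab)]
  -- weight of g τ
  have hweight : ∀ τ ∈ Finset.univ.filter (fun τ : Equiv.Perm (Fin (m + 1)) =>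
      ∀ i, i ≠ j₀ → τ i ≠ i),
      (-1 : R) ^ cyc (g τ) * (∏ v ∈ rlmVal (g τ), x v) * (∏ v ∈ excVal (g τ), y v)
      = x j * y (Fin.last (m + 1)) *
        ((-1 : R) ^ cyc τ * (∏ v ∈ (rlmVal τ).filter (· < j₀), x (castSucc v)) *
          (∏ v ∈ (excVal τ).filter (· ≠ j₀), y (castSucc v))) := by
    intro τ _
    have hsign : (-1 : R) ^ cyc (g τ) = (-1 : R) ^ cyc τ := by
      rw [cyc_sign, cyc_sign]
      have hs : Equiv.Perm.sign (g τ) = - Equiv.Perm.sign τ := by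
        rw [hg]
        simp only [map_mul]
        rw [sign_extAt, Equiv.Perm.sign_swap (Fin.ne_of_lt (castSucc_lt_last _))]
        exact mul_neg_one _
      rw [hs]
      push_cast
      rw [pow_succ]
      ring
    have hrlm : rlmVal (g τ) = insert (castSucc j₀)
        (((rlmVal τ).filter (· < j₀)).image castSucc) :=
      rlm_bridge (g τ) τ j₀ (hg_last τ) (hg_c τ) (hg_other τ)
    have hexc : excVal (g τ) = insert (Fin.last (m + 1))
        (((excVal τ).filter (· ≠ j₀)).image castSucc) :=
      exc_bridge (g τ) τ j₀ (hg_last τ) (hg_c τ) (hg_other τ)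
    rw [hsign, hrlm, hexc]
    rw [Finset.prod_insert (by
      intro hmem
      simp only [Finset.mem_image, Finset.mem_filter] at hmem
      obtain ⟨u, ⟨_, hu⟩, hc⟩ := hmem
      exact absurd (castSucc_injective _ hc) (Fin.ne_of_lt hu))]
    rw [Finset.prod_insert (by
      intro hmem
      simp only [Finset.mem_image, Finset.mem_filter] at hmem
      obtain ⟨u, _, hc⟩ := hmem
      exact absurd hc (Fin.ne_of_lt (castSucc_lt_last u)))]
    rw [Finset.prod_image (fun a _ b _ hab => castSucc_injective _ hab),
      Finset.prod_image (fun a _ b _ hab => castSucc_injective _ hab), hjc]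
    ring
  rw [Finset.sum_congr rfl hweight, ← Finset.mul_sum,
    h j₀ (fun v => x (castSucc v)) (fun v => y (castSucc v))]
  -- final product identities
  have hxset : Finset.univ.filter (· ≤ j)
      = insert j ((Finset.univ.filter (· < j₀)).image (castSucc : Fin (m+1) → Fin (m+2))) := by
    ext v
    simp only [Finset.mem_filter, Finset.mem_univ, true_and, Finset.mem_insert,
      Finset.mem_image]
    constructor
    · intro hv
      rcases eq_or_ne v j with rfl | hne
      · exact Or.inl rfl
      · have hvlt : v < j := lt_of_le_of_ne hv hne
        have hvne : v ≠ Fin.last (m + 1) := Fin.ne_of_lt (lt_of_lt_of_le hvlt (Fin.le_last j))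
        obtain ⟨u, hu⟩ : ∃ u, castSucc u = v := by
          obtain ⟨u, hu⟩ := Fin.exists_succAbove_eq hvne
          exact ⟨u, by rwa [Fin.succAbove_last] at hu⟩
        refine Or.inr ⟨u, ?_, hu⟩
        rw [Fin.lt_def]
        simp only [hj₀def]
        rw [← hu] at hvlt
        exact hvlt
    · rintro (rfl | ⟨u, hu, rfl⟩)
      · exact le_refl _
      · rw [← hjc]
        exact le_of_lt (by rwa [castSucc_lt_castSucc_iff])
  have hyset : Finset.univ.filter (j < ·)
      = insert (Fin.last (m + 1))
        ((Finset.univ.filter (j₀ < ·)).image (castSucc : Fin (m+1) → Fin (m+2))) := by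
    ext v
    simp only [Finset.mem_filter, Finset.mem_univ, true_and, Finset.mem_insert,
      Finset.mem_image]
    constructor
    · intro hv
      rcases eq_or_ne v (Fin.last (m + 1)) with rfl | hne
      · exact Or.inl rfl
      · obtain ⟨u, hu⟩ : ∃ u, castSucc u = v := by
          obtain ⟨u, hu⟩ := Fin.exists_succAbove_eq hne
          exact ⟨u, by rwa [Fin.succAbove_last] at hu⟩
        refine Or.inr ⟨u, ?_, hu⟩
        rw [← hu, ← hjc, castSucc_lt_castSucc_iff] at hv
        exact hv
    · rintro (rfl | ⟨u, hu, rfl⟩)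
      · exact lt_of_le_of_ne (Fin.le_last j) hj
      · rw [← hjc, castSucc_lt_castSucc_iff]
        exact hu
  rw [hxset, hyset]
  rw [Finset.prod_insert (by
    intro hmem
    simp only [Finset.mem_image, Finset.mem_filter] at hmem
    obtain ⟨u, ⟨_, hu⟩, hc⟩ := hmem
    rw [← hjc] at hc
    exact absurd (castSucc_injective _ hc) (Fin.ne_of_lt hu))]
  rw [Finset.prod_insert (by
    intro hmem
    simp only [Finset.mem_image, Finset.mem_filter] at hmem
    obtain ⟨u, _, hc⟩ := hmem
    exact absurd hc (Fin.ne_of_lt (castSucc_lt_last u)))]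
  rw [Finset.prod_image (fun a _ b _ hab => castSucc_injective _ hab),
    Finset.prod_image (fun a _ b _ hab => castSucc_injective _ hab)]
  ring

lemma extAt_inj {m : ℕ} (j : Fin (m + 1)) : Function.Injective (extAt j) := by
  intro a b hab
  refine Equiv.ext fun i => ?_
  have := congrArg (fun π : Equiv.Perm (Fin (m + 1)) => π (j.succAbove i)) hab
  simp only [extAt_succAbove] at this
  exact Fin.succAbove_right_injective this

theorem lemP_zero : LemP R 0 := by
  haveI : Subsingleton (Fin (0 + 1)) := ⟨fun a b => Fin.ext (by omega)⟩
  intro j x y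
  have hfilter : Finset.univ.filter
      (fun τ : Equiv.Perm (Fin 1) => ∀ i, i ≠ j → τ i ≠ i) = {1} := by
    apply Finset.eq_singleton_iff_unique_mem.mpr
    constructor
    · simp only [Finset.mem_filter, Finset.mem_univ, true_and]
      intro i hi
      exact absurd (Subsingleton.elim i j) hi
    · intro τ _
      exact Equiv.ext fun i => Subsingleton.elim _ _
  rw [hfilter, Finset.sum_singleton]
  have hcyc : cyc (1 : Equiv.Perm (Fin 1)) = 1 := by
    unfold cyc
    rw [Equiv.Perm.cycleType_one]
    simp
  have h1 : ((rlmVal (1 : Equiv.Perm (Fin 1))).filter (· < j)) = ∅ := by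
    apply Finset.filter_false_of_mem
    intro v _
    rw [Subsingleton.elim v j]
    exact lt_irrefl j
  have h2 : ((excVal (1 : Equiv.Perm (Fin 1))).filter (· ≠ j)) = ∅ := by
    apply Finset.filter_false_of_mem
    intro v _
    simp [Subsingleton.elim v j]
  have h3 : Finset.univ.filter (fun v : Fin 1 => v < j) = ∅ := by
    apply Finset.filter_false_of_mem
    intro v _
    rw [Subsingleton.elim v j]
    exact lt_irrefl j
  have h4 : Finset.univ.filter (fun v : Fin 1 => j < v) = ∅ := by
    apply Finset.filter_false_of_mem
    intro v _
    rw [Subsingleton.elim v j]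
    exact lt_irrefl j
  rw [hcyc, h1, h2, h3, h4]
  simp

theorem lemrec {m : ℕ} (thm1 : ThmP R (m + 1)) (thm0 : ThmP R m) : LemP R (m + 1) := by
  intro j x y
  set W : Equiv.Perm (Fin (m + 2)) → R := fun τ =>
    (-1 : R) ^ cyc τ * (∏ v ∈ (rlmVal τ).filter (· < j), x v) *
      (∏ v ∈ (excVal τ).filter (· ≠ j), y v) with hW
  set A : Fin (m + 2) → R := fun k =>
    (∏ v ∈ Finset.univ.filter (fun v => v ≤ k ∧ v < j), x v) *
      ∏ v ∈ Finset.univ.filter (fun v => k < v ∧ v ≠ j), y v with hA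
  -- split the sum
  rw [← Finset.sum_filter_add_sum_filter_not
    (Finset.univ.filter (fun τ : Equiv.Perm (Fin (m + 2)) => ∀ i, i ≠ j → τ i ≠ i))
    (fun τ => τ j = j) W]
  -- Part A : fixed point at j
  have hfixset : (Finset.univ.filter
        (fun τ : Equiv.Perm (Fin (m + 2)) => ∀ i, i ≠ j → τ i ≠ i)).filter
        (fun τ => τ j = j)
      = (Finset.univ.filter (fun ρ : Equiv.Perm (Fin (m + 1)) => ∀ u, ρ u ≠ u)).image
          (extAt j) := by
    rw [Finset.filter_filter]
    ext τ
    simp only [Finset.mem_filter, Finset.mem_univ, true_and, Finset.mem_image]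
    constructor
    · rintro ⟨hτ, hfix⟩
      refine ⟨resAt j τ hfix, ?_, extAt_resAt j τ hfix⟩
      intro u hu
      have h1 : j.succAbove (resAt j τ hfix u) = τ (j.succAbove u) := succAbove_resAt _ _ _ _
      rw [hu] at h1
      exact hτ (j.succAbove u) (Fin.succAbove_ne j u) h1.symm
    · rintro ⟨ρ, hρ, rfl⟩
      refine ⟨?_, extAt_self j ρ⟩
      intro i hi hfix
      obtain ⟨u, rfl⟩ := Fin.exists_succAbove_eq hi
      rw [extAt_succAbove] at hfix
      exact hρ u (Fin.succAbove_right_injective hfix)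
  have hPartA : ∑ τ ∈ (Finset.univ.filter
        (fun τ : Equiv.Perm (Fin (m + 2)) => ∀ i, i ≠ j → τ i ≠ i)).filter
        (fun τ => τ j = j), W τ
      = ∑ k' ∈ Finset.univ.filter (fun k' : Fin (m + 1) => k' ≠ Fin.last m),
          A (j.succAbove k') := by
    rw [hfixset, Finset.sum_image (fun a _ b _ hab => extAt_inj j hab)]
    have hweight : ∀ ρ ∈ Finset.univ.filter
        (fun ρ : Equiv.Perm (Fin (m + 1)) => ∀ u, ρ u ≠ u),
        W (extAt j ρ) = -((-1 : R) ^ cyc ρ *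
          (∏ u ∈ rlmVal ρ, (fun u => if castSucc u < j then x (j.succAbove u) else 1) u) *
          (∏ u ∈ excVal ρ, y (j.succAbove u))) := by
      intro ρ _
      simp only [hW]
      rw [rlm_extAt, exc_extAt,
        Finset.prod_image (fun a _ b _ hab => Fin.succAbove_right_injective hab),
        Finset.prod_image (fun a _ b _ hab => Fin.succAbove_right_injective hab)]
      have hsign : (-1 : R) ^ cyc (extAt j ρ) = -((-1 : R) ^ cyc ρ) := by
        rw [cyc_sign, cyc_sign, sign_extAt, pow_succ]
        ring
      rw [hsign, Finset.prod_filter]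
      ring
    rw [Finset.sum_congr rfl hweight]
    rw [← Finset.sum_fiberwise_of_maps_to
      (g := fun ρ : Equiv.Perm (Fin (m + 1)) => ρ (Fin.last m))
      (t := Finset.univ.filter (fun k' : Fin (m + 1) => k' ≠ Fin.last m))
      (by
        intro ρ hρ
        simp only [Finset.mem_filter, Finset.mem_univ, true_and] at hρ ⊢
        exact hρ (Fin.last m))]
    apply Finset.sum_congr rfl
    intro k' hk'
    have hk'ne : k' ≠ Fin.last m := (Finset.mem_filter.mp hk').2
    rw [Finset.filter_filter]
    have := thm0 k' hk'ne
      (fun u => if castSucc u < j then x (j.succAbove u) else 1)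
      (fun u => y (j.succAbove u))
    rw [Finset.sum_neg_distrib, this]
    have hxA : Finset.univ.filter (fun v : Fin (m + 2) => v ≤ j.succAbove k' ∧ v < j)
        = (Finset.univ.filter (fun u : Fin (m + 1) => u ≤ k' ∧ castSucc u < j)).image
            j.succAbove := by
      ext v
      simp only [Finset.mem_filter, Finset.mem_univ, true_and, Finset.mem_image]
      constructor
      · rintro ⟨hv1, hv2⟩
        obtain ⟨u, rfl⟩ := Fin.exists_succAbove_eq (Fin.ne_of_lt hv2)
        exact ⟨u, ⟨(Fin.succAbove_le_succAbove_iff).mp hv1,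
          (Fin.succAbove_lt_iff_castSucc_lt j u).mp hv2⟩, rfl⟩
      · rintro ⟨u, ⟨hu1, hu2⟩, rfl⟩
        exact ⟨(Fin.succAbove_le_succAbove_iff).mpr hu1,
          (Fin.succAbove_lt_iff_castSucc_lt j u).mpr hu2⟩
    have hyA : Finset.univ.filter (fun v : Fin (m + 2) => j.succAbove k' < v ∧ v ≠ j)
        = (Finset.univ.filter (fun u : Fin (m + 1) => k' < u)).image j.succAbove := by
      ext v
      simp only [Finset.mem_filter, Finset.mem_univ, true_and, Finset.mem_image]
      constructor
      · rintro ⟨hv1, hv2⟩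
        obtain ⟨u, rfl⟩ := Fin.exists_succAbove_eq hv2
        exact ⟨u, (Fin.succAbove_lt_succAbove_iff).mp hv1, rfl⟩
      · rintro ⟨u, hu, rfl⟩
        exact ⟨(Fin.succAbove_lt_succAbove_iff).mpr hu, Fin.succAbove_ne j u⟩
    simp only [hA]
    rw [hxA, hyA,
      Finset.prod_image (fun a _ b _ hab => Fin.succAbove_right_injective hab),
      Finset.prod_image (fun a _ b _ hab => Fin.succAbove_right_injective hab),
      ← Finset.prod_filter, Finset.filter_filter]
    ring
  -- Part B : derangements
  have hDset : (Finset.univ.filter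
        (fun τ : Equiv.Perm (Fin (m + 2)) => ∀ i, i ≠ j → τ i ≠ i)).filter
        (fun τ => ¬ τ j = j)
      = Finset.univ.filter (fun τ : Equiv.Perm (Fin (m + 2)) => ∀ i, τ i ≠ i) := by
    rw [Finset.filter_filter]
    apply Finset.filter_congr
    intro τ _
    constructor
    · rintro ⟨hτ, hj⟩ i
      rcases eq_or_ne i j with rfl | hi
      · exact hj
      · exact hτ i hi
    · intro hτ
      exact ⟨fun i _ => hτ i, hτ j⟩
  have hPartB : ∑ τ ∈ (Finset.univ.filter
        (fun τ : Equiv.Perm (Fin (m + 2)) => ∀ i, i ≠ j → τ i ≠ i)).filter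
        (fun τ => ¬ τ j = j), W τ
      = ∑ k ∈ Finset.univ.filter (fun k : Fin (m + 2) => k ≠ Fin.last (m + 1)), -(A k) := by
    rw [hDset]
    have hweight : ∀ τ ∈ Finset.univ.filter
        (fun τ : Equiv.Perm (Fin (m + 2)) => ∀ i, τ i ≠ i),
        W τ = (-1 : R) ^ cyc τ *
          (∏ v ∈ rlmVal τ, (fun v => if v < j then x v else 1) v) *
          (∏ v ∈ excVal τ, (fun v => if v ≠ j then y v else 1) v) := by
      intro τ _
      simp only [hW]
      rw [Finset.prod_filter, Finset.prod_filter]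
    rw [Finset.sum_congr rfl hweight]
    rw [← Finset.sum_fiberwise_of_maps_to
      (g := fun τ : Equiv.Perm (Fin (m + 2)) => τ (Fin.last (m + 1)))
      (t := Finset.univ.filter (fun k : Fin (m + 2) => k ≠ Fin.last (m + 1)))
      (by
        intro τ hτ
        simp only [Finset.mem_filter, Finset.mem_univ, true_and] at hτ ⊢
        exact hτ (Fin.last (m + 1)))]
    apply Finset.sum_congr rfl
    intro k hk
    have hkne : k ≠ Fin.last (m + 1) := (Finset.mem_filter.mp hk).2
    rw [Finset.filter_filter]
    rw [thm1 k hkne (fun v => if v < j then x v else 1) (fun v => if v ≠ j then y v else 1)]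
    simp only [hA]
    rw [← Finset.prod_filter, ← Finset.prod_filter,
      Finset.filter_filter, Finset.filter_filter]
  rw [hPartA, hPartB]
  -- telescoping
  have himg : Finset.image j.succAbove Finset.univ = Finset.univ.erase j := by
    ext v
    simp only [Finset.mem_image, Finset.mem_erase, Finset.mem_univ, true_and, and_true]
    constructor
    · rintro ⟨u, rfl⟩
      exact Fin.succAbove_ne j u
    · intro hv
      exact Fin.exists_succAbove_eq hv
  have t1 : ∑ k' ∈ Finset.univ.filter (fun k' : Fin (m + 1) => k' ≠ Fin.last m),
        A (j.succAbove k') + A (j.succAbove (Fin.last m))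
      = ∑ k' ∈ (Finset.univ : Finset (Fin (m + 1))), A (j.succAbove k') := by
    rw [Finset.filter_ne']
    exact Finset.sum_erase_add _ _ (Finset.mem_univ _)
  have t2 : ∑ k ∈ Finset.univ.filter (fun k : Fin (m + 2) => k ≠ Fin.last (m + 1)), A k
        + A (Fin.last (m + 1))
      = ∑ k ∈ (Finset.univ : Finset (Fin (m + 2))), A k := by
    rw [Finset.filter_ne']
    exact Finset.sum_erase_add _ _ (Finset.mem_univ _)
  have t3 : ∑ k' ∈ (Finset.univ : Finset (Fin (m + 1))), A (j.succAbove k') + A j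
      = ∑ k ∈ (Finset.univ : Finset (Fin (m + 2))), A k := by
    rw [show ∑ k' ∈ (Finset.univ : Finset (Fin (m + 1))), A (j.succAbove k')
        = ∑ v ∈ Finset.univ.erase j, A v from by
      rw [← himg, Finset.sum_image (fun a _ b _ hab => Fin.succAbove_right_injective hab)]]
    exact Finset.sum_erase_add _ _ (Finset.mem_univ j)
  have hAlast : A (j.succAbove (Fin.last m)) = A (Fin.last (m + 1)) := by
    rcases eq_or_ne j (Fin.last (m + 1)) with rfl | hne
    · rw [Fin.succAbove_of_castSucc_lt _ _ (castSucc_lt_last _)]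
      simp only [hA]
      congr 1
      · apply Finset.prod_congr _ (fun _ _ => rfl)
        ext v
        simp only [Finset.mem_filter, Finset.mem_univ, true_and, Fin.lt_def, Fin.le_def,
          Fin.val_last, Fin.coe_castSucc]
        omega
      · apply Finset.prod_congr _ (fun _ _ => rfl)
        ext v
        simp only [Finset.mem_filter, Finset.mem_univ, true_and, Fin.lt_def,
          Fin.val_last, Fin.coe_castSucc, ne_eq, Fin.ext_iff]
        omega
    · have hle : j ≤ castSucc (Fin.last m) := by
        rw [Fin.le_def]
        simp only [Fin.coe_castSucc, Fin.val_last]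
        have := j.isLt
        have hne' : j.val ≠ m + 1 := fun hh => hne (Fin.ext (by simp [hh]))
        omega
      rw [Fin.succAbove_of_le_castSucc _ _ hle, Fin.succ_last]
  have hsum : ∑ k ∈ Finset.univ.filter (fun k : Fin (m + 2) => k ≠ Fin.last (m + 1)), -(A k)
      = -(∑ k ∈ Finset.univ.filter (fun k : Fin (m + 2) => k ≠ Fin.last (m + 1)), A k) := by
    rw [Finset.sum_neg_distrib]
  rw [hsum]
  have hAj : A j = (∏ v ∈ Finset.univ.filter (· < j), x v) *
      ∏ v ∈ Finset.univ.filter (j < ·), y v := by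
    simp only [hA]
    congr 1
    · apply Finset.prod_congr _ (fun _ _ => rfl)
      ext v
      simp only [Finset.mem_filter, Finset.mem_univ, true_and]
      constructor
      · rintro ⟨_, hv⟩; exact hv
      · intro hv; exact ⟨le_of_lt hv, hv⟩
    · apply Finset.prod_congr _ (fun _ _ => rfl)
      ext v
      simp only [Finset.mem_filter, Finset.mem_univ, true_and]
      constructor
      · rintro ⟨hv, _⟩; exact hv
      · intro hv; exact ⟨hv, (Fin.ne_of_lt hv).symm⟩
  rw [← hAj]
  linear_combination t1 - t2 + t3 - hAlast

theorem lemP_all : ∀ m, LemP R m := by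
  intro m
  induction m using Nat.strong_induction_on with
  | _ m ih =>
    match m with
    | 0 => exact lemP_zero
    | Nat.succ m =>
      have thm1 : ThmP R (m + 1) := bridge (ih m (by omega))
      have thm0 : ThmP R m := by
        match m with
        | 0 =>
          intro j hj x y
          haveI : Subsingleton (Fin (0 + 1)) := ⟨fun a b => Fin.ext (by omega)⟩
          exact absurd (Subsingleton.elim j (Fin.last 0)) hj
        | Nat.succ k => exact bridge (ih k (by omega))
      exact lemrec thm1 thm0

theorem thmP_all (m : ℕ) : ThmP R (m + 1) := bridge (lemP_all m)

end Main

/-- With `Fin n` representing `[n]` 0-based (index `i : Fin n` is `i+1`),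
the variable `x i` is `x_{i+1}`; `σ ⟨n-1⟩ = ⟨j-1⟩` encodes `σ(n) = j`. -/
theorem stmt3 {R : Type*} [CommRing R] (n j : ℕ) (x y : Fin n → R)
    (hn : 2 ≤ n) (hj1 : 1 ≤ j) (hj2 : j ≤ n - 1) :
    ∑ σ ∈ Finset.univ.filter (fun σ : Equiv.Perm (Fin n) =>
        (∀ i, σ i ≠ i) ∧ σ ⟨n - 1, by omega⟩ = ⟨j - 1, by omega⟩),
      (-1 : R) ^ cyc σ * (∏ i ∈ rlmVal σ, x i) * (∏ i ∈ excVal σ, y i)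
    = -((∏ i ∈ Finset.univ.filter (fun i : Fin n => i.val < j), x i) *
        ∏ i ∈ Finset.univ.filter (fun i : Fin n => j ≤ i.val), y i) := by
  obtain ⟨k, rfl⟩ : ∃ k, n = k + 1 + 1 := ⟨n - 2, by omega⟩
  have hjlt : j - 1 < k + 1 + 1 := by omega
  have hjne : (⟨j - 1, hjlt⟩ : Fin (k + 1 + 1)) ≠ Fin.last (k + 1) := by
    intro hh
    have := congrArg Fin.val hh
    simp only [Fin.val_last] at this
    omega
  have h := thmP_all (R := R) k ⟨j - 1, hjlt⟩ hjne x y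
  have hset1 : Finset.univ.filter (fun i : Fin (k + 1 + 1) => i.val < j)
      = Finset.univ.filter (· ≤ (⟨j - 1, hjlt⟩ : Fin (k + 1 + 1))) := by
    apply Finset.filter_congr
    intro v _
    simp only [Fin.le_def]
    omega
  have hset2 : Finset.univ.filter (fun i : Fin (k + 1 + 1) => j ≤ i.val)
      = Finset.univ.filter ((⟨j - 1, hjlt⟩ : Fin (k + 1 + 1)) < ·) := by
    apply Finset.filter_congr
    intro v _
    simp only [Fin.lt_def]
    omega
  rw [hset1, hset2]
  exact h
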